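/- Let f ∈ L²(B) and ε > 0. Then there exists a function u : cl(B) \ {0} → ℂ that is twice continuously differentiable, such that u and ∇u are bounded on cl(B) \ {0}, the second derivatives satisfy the bound |∂_j∂_k u(ξ)| ≤ C/|ξ| for some constant C and all ξ ∈ cl(B) \ {0} and all j,k (so in particular u ∈ H²(B)), and such that the function g defined by g(ξ) := −(δ^{jk} − ξ^j ξ^k) ∂_j ∂_k u(ξ) + 5 ξ^j ∂_j u(ξ) + (15/4) u(ξ) satisfies ‖f − g‖_{L²(B)} < ε. In other words, the range of the degenerate elliptic operator u ↦ −(δ^{jk} − ξ^j ξ^k)∂_j∂_k u + 5ξ^j∂_j u + (15/4)u on such functions is dense in L²(B). -/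

import Mathlib

open MeasureTheory Metric

noncomputable section

/-- The punctured closed unit ball `cl(B) \ {0}` in `ℝ³`. -/
abbrev PB : Set (EuclideanSpace ℝ (Fin 3)) := closedBall 0 1 \ {0}

/-- First partial derivative `∂_k` (within `cl(B) \ {0}`). -/
noncomputable def pd1 (u : EuclideanSpace ℝ (Fin 3) → ℂ)
    (ξ : EuclideanSpace ℝ (Fin 3)) (k : Fin 3) : ℂ :=
  fderivWithin ℝ u PB ξ (EuclideanSpace.single k 1)

/-- Second partial derivative `∂_j∂_k` (within `cl(B) \ {0}`). -/
noncomputable def pd2 (u : EuclideanSpace ℝ (Fin 3) → ℂ)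
    (ξ : EuclideanSpace ℝ (Fin 3)) (j k : Fin 3) : ℂ :=
  fderivWithin ℝ (fun y => pd1 u y k) PB ξ (EuclideanSpace.single j 1)

open scoped ENNReal

namespace Stmt8Aux

open MvPolynomial Finsupp

abbrev E3 := EuclideanSpace ℝ (Fin 3)
def Fev (P : MvPolynomial (Fin 3) ℂ) : E3 → ℂ :=
  fun ξ => MvPolynomial.eval (fun i => (ξ i : ℂ)) P
def coordCLM (j : Fin 3) : E3 →L[ℝ] ℂ :=
  Complex.ofRealCLM.comp (EuclideanSpace.proj j)
lemma coordCLM_apply (j : Fin 3) (ξ : E3) : coordCLM j ξ = (ξ j : ℂ) := rfl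

lemma contDiff_Fev (P : MvPolynomial (Fin 3) ℂ) : ContDiff ℝ ⊤ (Fev P) := by
  induction P using MvPolynomial.induction_on with
  | C a =>
      have : Fev (C a) = fun _ : E3 => a := by funext x; simp [Fev]
      rw [this]; exact contDiff_const
  | add p q hp hq =>
      have : Fev (p + q) = fun ξ => Fev p ξ + Fev q ξ := by
        funext ξ; simp [Fev]
      rw [this]; exact hp.add hq
  | mul_X p n hp =>
      have : Fev (p * X n) = fun ξ => Fev p ξ * coordCLM n ξ := by
        funext ξ; simp [Fev, coordCLM_apply]
      rw [this]; exact hp.mul (coordCLM n).contDiff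

lemma hasFDerivAt_Fev (P : MvPolynomial (Fin 3) ℂ) (ξ : E3) :
    HasFDerivAt (Fev P) (∑ j : Fin 3, Fev (pderiv j P) ξ • coordCLM j) ξ := by
  induction P using MvPolynomial.induction_on with
  | C a =>
      have h : (∑ j : Fin 3, Fev (pderiv j (C a)) ξ • coordCLM j)
          = (0 : E3 →L[ℝ] ℂ) := by
        ext x
        simp [Fev, pderiv_C]
      rw [h]
      have : Fev (C a) = fun _ => a := by funext x; simp [Fev]
      rw [this]; exact hasFDerivAt_const _ _
  | add p q hp hq =>
      have h : (∑ j : Fin 3, Fev (pderiv j (p + q)) ξ • coordCLM j)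
          = (∑ j : Fin 3, Fev (pderiv j p) ξ • coordCLM j)
            + (∑ j : Fin 3, Fev (pderiv j q) ξ • coordCLM j) := by
        ext x
        simp [Fev, Finset.sum_add_distrib, add_mul]
      rw [h]
      have : Fev (p + q) = fun x => Fev p x + Fev q x := by funext x; simp [Fev]
      rw [this]; exact hp.add hq
  | mul_X p n hp =>
      have hc : HasFDerivAt (fun x : E3 => coordCLM n x) (coordCLM n) ξ :=
        (coordCLM n).hasFDerivAt
      have hmul := hp.mul hc
      have h1 : Fev (p * X n) = fun x => Fev p x * coordCLM n x := by
        funext x; simp [Fev, coordCLM_apply]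
      rw [h1]
      refine hmul.congr_fderiv (Eq.symm ?_)
      ext x
      simp only [ContinuousLinearMap.coe_sum', Finset.sum_apply,
        ContinuousLinearMap.coe_smul', Pi.smul_apply, ContinuousLinearMap.add_apply,
        smul_eq_mul]
      have hd : ∀ j : Fin 3, Fev (pderiv j (p * X n)) ξ
          = Fev (pderiv j p) ξ * (ξ n : ℂ) + Fev p ξ * (if j = n then 1 else 0) := by
        intro j
        rw [pderiv_mul]
        by_cases hjn : j = n
        · subst hjn; simp [Fev, coordCLM_apply]
        · rw [pderiv_X_of_ne (Ne.symm hjn)]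
          simp [Fev, coordCLM_apply, hjn]
      rw [Finset.sum_congr rfl fun j _ => by rw [hd j]]
      simp only [coordCLM_apply]
      have h3 : ∑ j : Fin 3, (Fev p ξ * if j = n then 1 else 0) * (x j : ℂ)
          = Fev p ξ * (x n : ℂ) := by
        rw [Finset.sum_eq_single n]
        · simp
        · intro b _ hb; simp [hb]
        · intro hn; simp at hn
      have h4 : ∑ j : Fin 3, Fev (pderiv j p) ξ * (ξ n : ℂ) * (x j : ℂ)
          = (ξ n : ℂ) * ∑ j : Fin 3, Fev (pderiv j p) ξ * (x j : ℂ) := by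
        rw [Finset.mul_sum]
        exact Finset.sum_congr rfl fun j _ => by ring
      rw [Finset.sum_congr rfl (fun j _ => add_mul (Fev (pderiv j p) ξ * (ξ n : ℂ))
        (Fev p ξ * (if j = n then 1 else 0)) ((x j : ℂ))), Finset.sum_add_distrib, h3, h4]
      ring

lemma uniqueDiffOn_PB : UniqueDiffOn ℝ PB := by
  intro ξ hξ
  have hcb : UniqueDiffOn ℝ (closedBall (0 : E3) 1) :=
    uniqueDiffOn_convex (convex_closedBall _ _)
      (by rw [interior_closedBall (0 : E3) one_ne_zero]; exact ⟨0, by simp⟩)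
  have h0 : ({0}ᶜ : Set E3) ∈ nhds ξ :=
    IsOpen.mem_nhds isOpen_compl_singleton (by simpa using hξ.2)
  have : PB = closedBall 0 1 ∩ {0}ᶜ := by
    ext x; simp [Set.diff_eq, Set.mem_compl_iff]
  rw [this]
  exact (uniqueDiffWithinAt_inter h0).2 (hcb ξ hξ.1)

lemma pd1_Fev (P : MvPolynomial (Fin 3) ℂ) {ξ : E3} (hξ : ξ ∈ PB) (k : Fin 3) :
    pd1 (Fev P) ξ k = Fev (pderiv k P) ξ := by
  have h := hasFDerivAt_Fev P ξ
  have hw : fderivWithin ℝ (Fev P) PB ξ = ∑ j : Fin 3, Fev (pderiv j P) ξ • coordCLM j :=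
    (h.hasFDerivWithinAt).fderivWithin (uniqueDiffOn_PB ξ hξ)
  rw [pd1, hw]
  simp only [ContinuousLinearMap.coe_sum', Finset.sum_apply,
    ContinuousLinearMap.coe_smul', Pi.smul_apply, smul_eq_mul, coordCLM_apply]
  rw [Finset.sum_eq_single k]
  · simp [EuclideanSpace.single_apply]
  · intro b _ hb
    simp [EuclideanSpace.single_apply, hb]
  · intro hn; simp at hn

lemma pd2_Fev (P : MvPolynomial (Fin 3) ℂ) {ξ : E3} (hξ : ξ ∈ PB) (j k : Fin 3) :
    pd2 (Fev P) ξ j k = Fev (pderiv j (pderiv k P)) ξ := by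
  have hcongr : fderivWithin ℝ (fun y => pd1 (Fev P) y k) PB ξ
      = fderivWithin ℝ (Fev (pderiv k P)) PB ξ := by
    apply fderivWithin_congr
    · intro y hy; exact pd1_Fev P hy k
    · exact pd1_Fev P hξ k
  rw [pd2, hcongr, ← pd1]
  exact pd1_Fev (pderiv k P) hξ j


def degs (s : Fin 3 →₀ ℕ) : ℕ := ∑ j : Fin 3, s j

lemma degs_eq_sum (s : Fin 3 →₀ ℕ) : s.sum (fun _ e => e) = degs s := by
  rw [degs, Finsupp.sum_fintype]
  intro i; rfl

lemma le_totalDegree_degs {p : MvPolynomial (Fin 3) ℂ} {s : Fin 3 →₀ ℕ}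
    (h : s ∈ p.support) : degs s ≤ p.totalDegree := by
  rw [← degs_eq_sum]; exact le_totalDegree h

-- atomic : X j * ∂j (monomial s c) = monomial s (s j * c)
lemma X_mul_pderiv_monomial (s : Fin 3 →₀ ℕ) (c : ℂ) (j : Fin 3) :
    (X j : MvPolynomial (Fin 3) ℂ) * pderiv j (monomial s c)
      = monomial s ((s j : ℂ) * c) := by
  rw [pderiv_monomial]
  by_cases hj : s j = 0
  · simp [hj]
  · rw [X, monomial_mul]
    have hs : Finsupp.single j 1 + (s - Finsupp.single j 1) = s := by
      ext i
      by_cases hij : i = j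
      · subst hij
        simp [Finsupp.single_apply]
        omega
      · simp [Finsupp.single_apply, Ne.symm hij, hij]
    rw [hs]
    ring_nf

lemma euler_monomial (s : Fin 3 →₀ ℕ) (c : ℂ) :
    ∑ j : Fin 3, (X j : MvPolynomial (Fin 3) ℂ) * pderiv j (monomial s c)
      = monomial s ((degs s : ℂ) * c) := by
  rw [Finset.sum_congr rfl fun j _ => X_mul_pderiv_monomial s c j]
  rw [← map_sum, ← Finset.sum_mul]
  congr 1
  push_cast [degs]
  ring

lemma degs_sub_single (s : Fin 3 →₀ ℕ) (k : Fin 3) (hk : s k ≠ 0) :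
    degs (s - Finsupp.single k 1) = degs s - 1 := by
  unfold degs
  have : ∀ i : Fin 3, ((s - Finsupp.single k 1) : Fin 3 →₀ ℕ) i
      = s i - (if i = k then 1 else 0) := by
    intro i
    rw [Finsupp.tsub_apply, Finsupp.single_apply]
    congr 1
    simp [eq_comm]
  rw [Finset.sum_congr rfl fun i _ => this i]
  rw [Finset.sum_eq_add_sum_sdiff_singleton_of_mem (Finset.mem_univ k)]
  rw [Finset.sum_eq_add_sum_sdiff_singleton_of_mem (Finset.mem_univ k) (fun i => s i)]
  have h2 : ∑ i ∈ Finset.univ \ {k}, (s i - if i = k then 1 else 0)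
      = ∑ i ∈ Finset.univ \ {k}, s i := by
    refine Finset.sum_congr rfl fun i hi => ?_
    simp only [Finset.mem_sdiff, Finset.mem_singleton] at hi
    simp [hi.2]
  rw [h2]
  simp only [if_pos rfl, if_true]
  have hsum : (1:ℕ) ≤ s k := Nat.one_le_iff_ne_zero.2 hk
  omega

-- second-order Euler identity on monomials
lemma euler2_monomial (s : Fin 3 →₀ ℕ) (c : ℂ) :
    ∑ j : Fin 3, ∑ k : Fin 3, ((X j * X k : MvPolynomial (Fin 3) ℂ))
        * pderiv j (pderiv k (monomial s c))
      = monomial s (((degs s : ℂ) - 1) * (degs s : ℂ) * c) := by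
  rw [Finset.sum_comm]
  have hterm : ∀ k : Fin 3,
      ∑ j : Fin 3, ((X j * X k : MvPolynomial (Fin 3) ℂ)) * pderiv j (pderiv k (monomial s c))
        = monomial s (((degs s : ℂ) - 1) * ((s k : ℂ) * c)) := by
    intro k
    have h1 : ∀ j : Fin 3, (X j * X k : MvPolynomial (Fin 3) ℂ) * pderiv j (pderiv k (monomial s c))
        = X k * (X j * pderiv j (pderiv k (monomial s c))) := by
      intro j; ring
    rw [Finset.sum_congr rfl fun j _ => h1 j, ← Finset.mul_sum]
    rw [pderiv_monomial, euler_monomial]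
    by_cases hk : s k = 0
    · simp [hk]
    · rw [degs_sub_single s k hk]
      have hd : (1:ℕ) ≤ degs s := by
        unfold degs
        calc 1 ≤ s k := Nat.one_le_iff_ne_zero.2 hk
        _ ≤ _ := Finset.single_le_sum (f := fun i => s i) (fun i _ => Nat.zero_le _)
            (Finset.mem_univ k)
      have hcast : ((degs s - 1 : ℕ) : ℂ) = (degs s : ℂ) - 1 := by
        push_cast [hd]; ring
      rw [hcast]
      have := X_mul_pderiv_monomial s (((degs s : ℂ) - 1) * c) k
      rw [pderiv_monomial] at this
      calc (X k : MvPolynomial (Fin 3) ℂ) * monomial (s - Finsupp.single k 1)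
            (((degs s:ℂ) - 1) * (c * (s k : ℕ)))
          = X k * monomial (s - Finsupp.single k 1) ((((degs s:ℂ) - 1) * c) * (s k : ℕ)) := by
            ring_nf
        _ = monomial s ((s k : ℂ) * (((degs s:ℂ) - 1) * c)) := this
        _ = monomial s (((degs s : ℂ) - 1) * ((s k : ℂ) * c)) := by ring_nf
  rw [Finset.sum_congr rfl fun k _ => hterm k]
  rw [← map_sum]
  congr 1
  rw [← Finset.mul_sum]
  have : ∑ k : Fin 3, (s k : ℂ) * c = (degs s : ℂ) * c := by
    rw [← Finset.sum_mul]; congr 1; push_cast [degs]; ring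
  rw [this]
  ring

def lam (n : ℕ) : ℂ := ((n:ℂ) - 1) * n + 5 * n + 15/4

lemma lam_ne_zero (n : ℕ) : lam n ≠ 0 := by
  have h : lam n = (((n:ℝ)^2 + 4*n + 15/4 : ℝ) : ℂ) := by
    unfold lam; push_cast; ring
  rw [h, Ne, Complex.ofReal_eq_zero]
  positivity

def Δop (p : MvPolynomial (Fin 3) ℂ) : MvPolynomial (Fin 3) ℂ :=
  ∑ j : Fin 3, pderiv j (pderiv j p)

def Lop (p : MvPolynomial (Fin 3) ℂ) : MvPolynomial (Fin 3) ℂ :=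
  -(∑ j : Fin 3, ∑ k : Fin 3,
      (MvPolynomial.C (if j = k then (1:ℂ) else 0) - X j * X k) * pderiv j (pderiv k p)) +
    MvPolynomial.C 5 * (∑ j : Fin 3, X j * pderiv j p) + MvPolynomial.C (15/4) * p

lemma Lop_expand (p : MvPolynomial (Fin 3) ℂ) :
    Lop p = (∑ j : Fin 3, ∑ k : Fin 3, (X j * X k) * pderiv j (pderiv k p))
      + MvPolynomial.C 5 * (∑ j : Fin 3, X j * pderiv j p)
      + MvPolynomial.C (15/4) * p - Δop p := by
  unfold Lop Δop
  have h : ∀ j k : Fin 3, (MvPolynomial.C (if j = k then (1:ℂ) else 0) - X j * X k)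
      * pderiv j (pderiv k p)
      = (if j = k then pderiv j (pderiv k p) else 0) - (X j * X k) * pderiv j (pderiv k p) := by
    intro j k
    by_cases hjk : j = k <;> simp [hjk, sub_mul]
  rw [Finset.sum_congr rfl fun j _ => Finset.sum_congr rfl fun k _ => h j k]
  have h2 : ∀ j : Fin 3, ∑ k : Fin 3,
      ((if j = k then pderiv j (pderiv k p) else 0) - (X j * X k) * pderiv j (pderiv k p))
      = pderiv j (pderiv j p) - ∑ k : Fin 3, (X j * X k) * pderiv j (pderiv k p) := by
    intro j
    rw [Finset.sum_sub_distrib]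
    congr 1
    rw [Finset.sum_ite_eq Finset.univ j fun k => pderiv j (pderiv k p)]
    simp
  rw [Finset.sum_congr rfl fun j _ => h2 j, Finset.sum_sub_distrib]
  ring

lemma Lop_monomial (s : Fin 3 →₀ ℕ) (c : ℂ) :
    Lop (monomial s c) = monomial s (lam (degs s) * c) - Δop (monomial s c) := by
  rw [Lop_expand, euler2_monomial, euler_monomial]
  congr 2
  rw [C_mul_monomial, C_mul_monomial, ← map_add, ← map_add]
  congr 1
  unfold lam
  ring

lemma Lop_add (a b : MvPolynomial (Fin 3) ℂ) : Lop (a + b) = Lop a + Lop b := by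
  unfold Lop
  simp only [map_add, mul_add, Finset.sum_add_distrib]
  ring

lemma Δop_add (a b : MvPolynomial (Fin 3) ℂ) : Δop (a + b) = Δop a + Δop b := by
  unfold Δop
  simp only [map_add, Finset.sum_add_distrib]

def LopHom : MvPolynomial (Fin 3) ℂ →+ MvPolynomial (Fin 3) ℂ :=
  AddMonoidHom.mk' Lop Lop_add

def ΔopHom : MvPolynomial (Fin 3) ℂ →+ MvPolynomial (Fin 3) ℂ :=
  AddMonoidHom.mk' Δop Δop_add

def Ainv (p : MvPolynomial (Fin 3) ℂ) : MvPolynomial (Fin 3) ℂ :=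
  ∑ s ∈ p.support, monomial s ((lam (degs s))⁻¹ * coeff s p)

lemma Lop_Ainv (p : MvPolynomial (Fin 3) ℂ) : Lop (Ainv p) = p - Δop (Ainv p) := by
  have h1 : Lop (Ainv p) = ∑ s ∈ p.support, Lop (monomial s ((lam (degs s))⁻¹ * coeff s p)) :=
    map_sum LopHom _ _
  have h2 : Δop (Ainv p) = ∑ s ∈ p.support, Δop (monomial s ((lam (degs s))⁻¹ * coeff s p)) :=
    map_sum ΔopHom _ _
  rw [h1, h2, Finset.sum_congr rfl fun s _ => Lop_monomial s _, Finset.sum_sub_distrib]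
  congr 1
  have h3 : ∀ s ∈ p.support, monomial s (lam (degs s) * ((lam (degs s))⁻¹ * coeff s p))
      = monomial s (coeff s p) := by
    intro s _
    congr 1
    rw [← mul_assoc, mul_inv_cancel₀ (lam_ne_zero _), one_mul]
  rw [Finset.sum_congr rfl h3, support_sum_monomial_coeff]

lemma totalDegree_Ainv_le (p : MvPolynomial (Fin 3) ℂ) :
    (Ainv p).totalDegree ≤ p.totalDegree := by
  refine (totalDegree_finset_sum _ _).trans (Finset.sup_le fun s hs => ?_)
  exact (totalDegree_monomial_le _ _).trans
    (le_of_eq_of_le (degs_eq_sum s) (le_totalDegree_degs hs))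

lemma totalDegree_pderiv_succ {q : MvPolynomial (Fin 3) ℂ} {n : ℕ} (j : Fin 3)
    (h : q.totalDegree ≤ n + 1) : (pderiv j q).totalDegree ≤ n := by
  conv_lhs => rw [← support_sum_monomial_coeff q]
  rw [map_sum]
  refine (totalDegree_finset_sum _ _).trans (Finset.sup_le fun s hs => ?_)
  rw [pderiv_monomial]
  by_cases hj : s j = 0
  · simp [hj]
  · refine (totalDegree_monomial_le _ _).trans ?_
    have he : ((s - Finsupp.single j 1).sum fun _ e => e) = degs s - 1 := by
      rw [degs_eq_sum, degs_sub_single s j hj]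
    refine le_of_eq_of_le he ?_
    have := (le_totalDegree_degs hs).trans h
    omega

lemma pderiv_eq_zero_of_totalDegree_eq_zero {q : MvPolynomial (Fin 3) ℂ} (j : Fin 3)
    (h : q.totalDegree = 0) : pderiv j q = 0 := by
  rw [totalDegree_eq_zero_iff] at h
  conv_lhs => rw [← support_sum_monomial_coeff q]
  rw [map_sum]
  refine Finset.sum_eq_zero fun s hs => ?_
  rw [pderiv_monomial, h s hs j]
  simp

lemma totalDegree_pderiv_le (q : MvPolynomial (Fin 3) ℂ) (j : Fin 3) :
    (pderiv j q).totalDegree ≤ q.totalDegree := by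
  cases h : q.totalDegree with
  | zero => rw [pderiv_eq_zero_of_totalDegree_eq_zero j h]; simp
  | succ m => exact (totalDegree_pderiv_succ j h.le).trans (Nat.le_succ m)

theorem exists_sol (p : MvPolynomial (Fin 3) ℂ) : ∃ u, Lop u = p := by
  suffices H : ∀ n (p : MvPolynomial (Fin 3) ℂ), p.totalDegree ≤ n → ∃ u, Lop u = p from
    H p.totalDegree p le_rfl
  intro n
  induction n with
  | zero =>
      intro p hp
      refine ⟨Ainv p, ?_⟩
      rw [Lop_Ainv]
      have h0 : (Ainv p).totalDegree = 0 :=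
        Nat.le_zero.mp ((totalDegree_Ainv_le p).trans hp)
      have : Δop (Ainv p) = 0 := by
        unfold Δop
        refine Finset.sum_eq_zero fun j _ => ?_
        rw [pderiv_eq_zero_of_totalDegree_eq_zero j h0]
        simp
      rw [this, sub_zero]
  | succ n ih =>
      intro p hp
      have hdeg : (Δop (Ainv p)).totalDegree ≤ n := by
        refine (totalDegree_finset_sum _ _).trans (Finset.sup_le fun j _ => ?_)
        exact (totalDegree_pderiv_le _ j).trans
          (totalDegree_pderiv_succ j ((totalDegree_Ainv_le p).trans hp))
      obtain ⟨v, hv⟩ := ih (Δop (Ainv p)) hdeg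
      refine ⟨Ainv p + v, ?_⟩
      rw [Lop_add, Lop_Ainv, hv]
      ring


-- the compact space
abbrev K3 : Set E3 := closedBall (0 : E3) 1
instance : CompactSpace K3 := isCompact_iff_compactSpace.mp (isCompact_closedBall _ _)

def cmap (i : Fin 3) : C(K3, ℝ) :=
  ⟨fun x => (x : E3) i, (EuclideanSpace.proj i).continuous.comp continuous_subtype_val⟩

def Φ : MvPolynomial (Fin 3) ℝ →ₐ[ℝ] C(K3, ℝ) := MvPolynomial.aeval cmap

lemma Φ_apply (q : MvPolynomial (Fin 3) ℝ) (x : K3) :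
    Φ q x = MvPolynomial.eval (fun i => (x : E3) i) q := by
  induction q using MvPolynomial.induction_on with
  | C a => simp [Φ]
  | add p q hp hq => simp [map_add, hp, hq]
  | mul_X p n hp =>
      rw [map_mul, ContinuousMap.mul_apply, hp]
      have hX : Φ (X n) x = (x : E3) n := by
        simp only [Φ, MvPolynomial.aeval_X]; rfl
      rw [hX, eval_mul, eval_X]

lemma Φ_range_separates : (Φ.range : Subalgebra ℝ C(K3, ℝ)).SeparatesPoints := by
  intro x y hxy
  have hne : (x : E3) ≠ (y : E3) := Subtype.coe_injective.ne hxy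
  have : ∃ i, (x : E3) i ≠ (y : E3) i := by
    by_contra h
    push_neg at h
    exact hne (by ext i; exact h i)
  obtain ⟨i, hi⟩ := this
  refine ⟨⇑(Φ (X i)), ⟨Φ (X i), AlgHom.mem_range_self Φ (X i), rfl⟩, ?_⟩
  simpa [Φ_apply] using hi

lemma Fev_map_ofReal (q : MvPolynomial (Fin 3) ℝ) (ξ : E3) :
    Fev (MvPolynomial.map Complex.ofRealHom q) ξ
      = ((MvPolynomial.eval (fun i => ξ i) q : ℝ) : ℂ) := by
  rw [Fev, eval_map]
  have h := eval₂_comp_left Complex.ofRealHom (RingHom.id ℝ) (fun i => ξ i) q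
  rw [RingHom.comp_id, eval₂_id] at h
  exact h.symm

/-- polynomial approximation in L² of the ball -/
theorem poly_approx (f : E3 → ℂ)
    (hf : MemLp f 2 (volume.restrict (ball (0 : E3) 1)))
    (ε : ℝ) (hε : 0 < ε) :
    ∃ P : MvPolynomial (Fin 3) ℂ,
      eLpNorm (fun ξ => f ξ - Fev P ξ) 2 (volume.restrict (ball (0 : E3) 1))
        < ENNReal.ofReal ε := by
  set μ := volume.restrict (ball (0 : E3) 1) with hμ
  haveI : μ.WeaklyRegular :=
    MeasureTheory.Measure.WeaklyRegular.restrict_of_measure_ne_top measure_ball_lt_top.ne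
  -- step 1 : bounded continuous approximation
  obtain ⟨g₀, hg₀, -⟩ := hf.exists_boundedContinuous_eLpNorm_sub_le (by norm_num)
    (ε := ENNReal.ofReal (ε/4)) (by simp [hε, ENNReal.ofReal_eq_zero])
  -- step 2 : choose δ
  set B : ℝ≥0∞ := μ Set.univ ^ (2 : ℝ≥0∞).toReal⁻¹ with hB
  have hBfin : B ≠ ∞ := by
    refine (ENNReal.rpow_lt_top_of_nonneg (by norm_num) ?_).ne
    rw [hμ]
    simp only [Measure.restrict_apply_univ]
    exact measure_ball_lt_top.ne
  set δ : ℝ := (ε/8) / (B.toReal + 1) with hδdef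
  have hBt : 0 ≤ B.toReal := ENNReal.toReal_nonneg
  have hδ : 0 < δ := by positivity
  -- step 3 : Stone-Weierstrass for re and im parts
  obtain ⟨gRe, hgRe⟩ := ContinuousMap.exists_mem_subalgebra_near_continuous_of_separatesPoints
    Φ.range Φ_range_separates (fun x : K3 => (g₀ (x : E3)).re)
    (Complex.continuous_re.comp (g₀.continuous.comp continuous_subtype_val)) δ hδ
  obtain ⟨gIm, hgIm⟩ := ContinuousMap.exists_mem_subalgebra_near_continuous_of_separatesPoints
    Φ.range Φ_range_separates (fun x : K3 => (g₀ (x : E3)).im)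
    (Complex.continuous_im.comp (g₀.continuous.comp continuous_subtype_val)) δ hδ
  obtain ⟨qRe, hqRe⟩ := gRe.2
  obtain ⟨qIm, hqIm⟩ := gIm.2
  -- the polynomial
  set P : MvPolynomial (Fin 3) ℂ :=
    MvPolynomial.map Complex.ofRealHom qRe
      + MvPolynomial.C Complex.I * MvPolynomial.map Complex.ofRealHom qIm with hP
  refine ⟨P, ?_⟩
  -- pointwise bound on the ball
  have hpt : ∀ ξ ∈ closedBall (0 : E3) 1, ‖g₀ ξ - Fev P ξ‖ ≤ 2 * δ := by
    intro ξ hξ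
    set x : K3 := ⟨ξ, hξ⟩
    have hqRe' : Φ qRe = ↑gRe := hqRe
    have hqIm' : Φ qIm = ↑gIm := hqIm
    have hevP : Fev P ξ = ((MvPolynomial.eval (fun i => ξ i) qRe : ℝ) : ℂ)
        + Complex.I * ((MvPolynomial.eval (fun i => ξ i) qIm : ℝ) : ℂ) := by
      have h0 : Fev P ξ = Fev (MvPolynomial.map Complex.ofRealHom qRe) ξ
          + Complex.I * Fev (MvPolynomial.map Complex.ofRealHom qIm) ξ := by
        rw [hP]
        simp [Fev]
      rw [h0, Fev_map_ofReal, Fev_map_ofReal]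
    have hre : |(g₀ ξ - Fev P ξ).re| < δ := by
      rw [hevP]
      have h1 := hgRe x
      rw [← hqRe', Φ_apply] at h1
      have h2 : |MvPolynomial.eval (fun i => ξ i) qRe - (g₀ ξ).re| < δ := by
        simpa [Real.norm_eq_abs] using h1
      have h3 : (g₀ ξ - (((MvPolynomial.eval (fun i => ξ i) qRe : ℝ) : ℂ)
          + Complex.I * ((MvPolynomial.eval (fun i => ξ i) qIm : ℝ) : ℂ))).re
          = (g₀ ξ).re - MvPolynomial.eval (fun i => ξ i) qRe := by
        simp
      rw [h3, abs_sub_comm]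
      exact h2
    have him : |(g₀ ξ - Fev P ξ).im| < δ := by
      rw [hevP]
      have h1 := hgIm x
      rw [← hqIm', Φ_apply] at h1
      have h2 : |MvPolynomial.eval (fun i => ξ i) qIm - (g₀ ξ).im| < δ := by
        simpa [Real.norm_eq_abs] using h1
      have h3 : (g₀ ξ - (((MvPolynomial.eval (fun i => ξ i) qRe : ℝ) : ℂ)
          + Complex.I * ((MvPolynomial.eval (fun i => ξ i) qIm : ℝ) : ℂ))).im
          = (g₀ ξ).im - MvPolynomial.eval (fun i => ξ i) qIm := by
        simp
      rw [h3, abs_sub_comm]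
      exact h2
    calc ‖g₀ ξ - Fev P ξ‖ ≤ |(g₀ ξ - Fev P ξ).re| + |(g₀ ξ - Fev P ξ).im| :=
          Complex.norm_le_abs_re_add_abs_im _
      _ ≤ δ + δ := add_le_add hre.le him.le
      _ = 2 * δ := by ring
  -- L² bound for the second part
  have hae : ∀ᵐ ξ ∂μ, ‖g₀ ξ - Fev P ξ‖ ≤ 2 * δ := by
    rw [hμ]
    filter_upwards [ae_restrict_mem measurableSet_ball] with ξ hξ
    exact hpt ξ (ball_subset_closedBall hξ)
  have h2 : eLpNorm (fun ξ => g₀ ξ - Fev P ξ) 2 μ ≤ B * ENNReal.ofReal (2 * δ) :=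
    eLpNorm_le_of_ae_bound hae
  have h2' : B * ENNReal.ofReal (2 * δ) < ENNReal.ofReal (ε/2) := by
    calc B * ENNReal.ofReal (2 * δ) ≤ ENNReal.ofReal B.toReal * ENNReal.ofReal (2 * δ) := by
          rw [ENNReal.ofReal_toReal hBfin]
      _ = ENNReal.ofReal (B.toReal * (2 * δ)) := by
          rw [ENNReal.ofReal_mul hBt]
      _ < ENNReal.ofReal (ε/2) := by
          apply ENNReal.ofReal_lt_ofReal_iff (by linarith) |>.mpr
          rw [hδdef]
          have h1 : B.toReal / (B.toReal + 1) < 1 := by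
            rw [div_lt_one (by linarith)]; linarith
          have h2 : 0 ≤ B.toReal / (B.toReal + 1) := by positivity
          have h3 : B.toReal * (2 * (ε / 8 / (B.toReal + 1)))
              = ε/4 * (B.toReal / (B.toReal + 1)) := by
            field_simp
            ring
          rw [h3]
          nlinarith [h1, h2, hε]
  -- combine
  have hsplit : (fun ξ => f ξ - Fev P ξ)
      = (fun ξ => (f ξ - g₀ ξ) + (g₀ ξ - Fev P ξ)) := by
    funext ξ; ring
  rw [hsplit]
  have hmeas1 : AEStronglyMeasurable (fun ξ => f ξ - g₀ ξ) μ :=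
    hf.aestronglyMeasurable.sub (g₀.continuous.aestronglyMeasurable)
  have hmeas2 : AEStronglyMeasurable (fun ξ => g₀ ξ - Fev P ξ) μ :=
    g₀.continuous.aestronglyMeasurable.sub (contDiff_Fev P).continuous.aestronglyMeasurable
  calc eLpNorm (fun ξ => (f ξ - g₀ ξ) + (g₀ ξ - Fev P ξ)) 2 μ
      ≤ eLpNorm (fun ξ => f ξ - g₀ ξ) 2 μ + eLpNorm (fun ξ => g₀ ξ - Fev P ξ) 2 μ :=
        eLpNorm_add_le hmeas1 hmeas2 one_le_two
    _ < ENNReal.ofReal (ε/2) + ENNReal.ofReal (ε/2) := by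
        have hg₀' : eLpNorm (fun ξ => f ξ - g₀ ξ) 2 μ ≤ ENNReal.ofReal (ε/4) := hg₀
        refine ENNReal.add_lt_add_of_le_of_lt ?_ ?_ (lt_of_le_of_lt h2 h2')
        · exact ne_top_of_le_ne_top ENNReal.ofReal_ne_top hg₀'
        · exact le_trans hg₀' (by
            apply ENNReal.ofReal_le_ofReal; linarith)
    _ = ENNReal.ofReal ε := by
        rw [← ENNReal.ofReal_add (by linarith) (by linarith)]
        norm_num


-- the key pointwise identity on PB
lemma g_eq (U : MvPolynomial (Fin 3) ℂ) {ξ : E3} (hξ : ξ ∈ PB) :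
    (-(∑ j : Fin 3, ∑ k : Fin 3,
          (((if j = k then (1:ℝ) else 0) - ξ j * ξ k : ℝ) : ℂ) * pd2 (Fev U) ξ j k) +
        5 * (∑ j : Fin 3, (ξ j : ℂ) * pd1 (Fev U) ξ j) + (15/4) * Fev U ξ)
      = Fev (Lop U) ξ := by
  have h2 : ∀ j k : Fin 3, pd2 (Fev U) ξ j k = Fev (pderiv j (pderiv k U)) ξ :=
    fun j k => pd2_Fev U hξ j k
  have h1 : ∀ k : Fin 3, pd1 (Fev U) ξ k = Fev (pderiv k U) ξ := fun k => pd1_Fev U hξ k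
  simp only [h1, h2, Fev, Lop]
  simp only [map_add, map_neg, map_mul, map_sum, map_sub, eval_C, eval_X]
  push_cast [apply_ite Complex.ofReal]
  norm_num

end Stmt8Aux

open Stmt8Aux in
/-- Density of the range of the degenerate elliptic operator
`u ↦ -(δ^{jk} - ξ^jξ^k)∂_j∂_ku + 5ξ^j∂_ju + (15/4)u` in `L²(B)`:
for every `f ∈ L²(B)` and `ε > 0` there is `u`, twice continuously differentiable on
`cl(B) \ {0}`, with `u`, `∇u` bounded and `|∂_j∂_ku(ξ)| ≤ C/|ξ|`, such that
`‖f - g‖_{L²(B)} < ε` where `g` is given by the displayed formula. -/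
theorem stmt8 (f : EuclideanSpace ℝ (Fin 3) → ℂ)
    (hf : MemLp f 2 (volume.restrict (ball (0 : EuclideanSpace ℝ (Fin 3)) 1)))
    (ε : ℝ) (hε : 0 < ε) :
    ∃ u : EuclideanSpace ℝ (Fin 3) → ℂ,
      ContDiffOn ℝ 2 u PB ∧
      (∃ M : ℝ, ∀ ξ ∈ PB, ‖u ξ‖ ≤ M ∧ ∀ k : Fin 3, ‖pd1 u ξ k‖ ≤ M) ∧
      (∃ C : ℝ, ∀ ξ ∈ PB, ∀ j k : Fin 3, ‖pd2 u ξ j k‖ ≤ C / ‖ξ‖) ∧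
      eLpNorm
        (fun ξ => f ξ -
          (-(∑ j : Fin 3, ∑ k : Fin 3,
                (((if j = k then (1:ℝ) else 0) - ξ j * ξ k : ℝ) : ℂ) * pd2 u ξ j k) +
            5 * (∑ j : Fin 3, (ξ j : ℂ) * pd1 u ξ j) + (15/4) * u ξ))
        2 (volume.restrict (ball (0 : EuclideanSpace ℝ (Fin 3)) 1)) <
        ENNReal.ofReal ε := by
  obtain ⟨p, hp⟩ := poly_approx f hf ε hε
  obtain ⟨U, hU⟩ := exists_sol p
  refine ⟨Fev U, ((contDiff_Fev U).of_le le_top).contDiffOn, ?_, ?_, ?_⟩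
  · -- boundedness of u and ∇u
    obtain ⟨M0, hM0⟩ := (isCompact_closedBall (0 : E3) 1).exists_bound_of_continuousOn
      (contDiff_Fev U).continuous.continuousOn
    have hex : ∀ k : Fin 3, ∃ C, ∀ x ∈ closedBall (0 : E3) 1, ‖Fev (MvPolynomial.pderiv k U) x‖ ≤ C :=
      fun k => (isCompact_closedBall (0 : E3) 1).exists_bound_of_continuousOn
        (contDiff_Fev _).continuous.continuousOn
    choose Mk hMk using hex
    refine ⟨|M0| + ∑ k : Fin 3, |Mk k|, fun ξ hξ => ⟨?_, fun k => ?_⟩⟩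
    · have h1 := hM0 ξ hξ.1
      have h2 : (0:ℝ) ≤ ∑ k : Fin 3, |Mk k| :=
        Finset.sum_nonneg fun k _ => abs_nonneg _
      calc ‖Fev U ξ‖ ≤ M0 := h1
        _ ≤ |M0| := le_abs_self _
        _ ≤ _ := by linarith
    · rw [pd1_Fev U hξ k]
      have h1 := hMk k ξ hξ.1
      have h2 : |Mk k| ≤ ∑ k : Fin 3, |Mk k| :=
        Finset.single_le_sum (f := fun k => |Mk k|) (fun i _ => abs_nonneg _) (Finset.mem_univ k)
      calc ‖Fev (MvPolynomial.pderiv k U) ξ‖ ≤ Mk k := h1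
        _ ≤ |Mk k| := le_abs_self _
        _ ≤ ∑ k : Fin 3, |Mk k| := h2
        _ ≤ _ := by
            have : (0:ℝ) ≤ |M0| := abs_nonneg _
            linarith
  · -- second derivative bound
    have hex : ∀ j k : Fin 3, ∃ C, ∀ x ∈ closedBall (0 : E3) 1,
        ‖Fev (MvPolynomial.pderiv j (MvPolynomial.pderiv k U)) x‖ ≤ C :=
      fun j k => (isCompact_closedBall (0 : E3) 1).exists_bound_of_continuousOn
        (contDiff_Fev _).continuous.continuousOn
    choose Cjk hCjk using hex
    set C : ℝ := ∑ j : Fin 3, ∑ k : Fin 3, |Cjk j k| with hC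
    have hC0 : 0 ≤ C :=
      Finset.sum_nonneg fun j _ => Finset.sum_nonneg fun k _ => abs_nonneg _
    refine ⟨C, fun ξ hξ j k => ?_⟩
    have hle : ‖pd2 (Fev U) ξ j k‖ ≤ C := by
      rw [pd2_Fev U hξ j k]
      calc ‖Fev (MvPolynomial.pderiv j (MvPolynomial.pderiv k U)) ξ‖ ≤ Cjk j k :=
            hCjk j k ξ hξ.1
        _ ≤ |Cjk j k| := le_abs_self _
        _ ≤ ∑ k : Fin 3, |Cjk j k| :=
            Finset.single_le_sum (f := fun k => |Cjk j k|) (fun i _ => abs_nonneg _)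
              (Finset.mem_univ k)
        _ ≤ C := Finset.single_le_sum
            (f := fun j => ∑ k : Fin 3, |Cjk j k|)
            (fun i _ => Finset.sum_nonneg fun k _ => abs_nonneg _) (Finset.mem_univ j)
    have hξpos : 0 < ‖ξ‖ := by
      simp only [norm_pos_iff]
      simpa using hξ.2
    have hξ1 : ‖ξ‖ ≤ 1 := mem_closedBall_zero_iff.mp hξ.1
    refine hle.trans ?_
    rw [le_div_iff₀ hξpos]
    nlinarith
  · -- the approximation
    set μ := volume.restrict (ball (0 : E3) 1) with hμ
    have hzero : ∀ᵐ ξ ∂μ, ξ ≠ (0 : E3) := by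
      rw [ae_iff]
      have hs : {ξ : E3 | ¬ ξ ≠ 0} = {(0 : E3)} := by ext x; simp
      rw [hs, hμ, Measure.restrict_apply (measurableSet_singleton 0)]
      exact measure_mono_null Set.inter_subset_left (measure_singleton 0)
    have h0 : (fun ξ => f ξ -
        (-(∑ j : Fin 3, ∑ k : Fin 3,
              (((if j = k then (1:ℝ) else 0) - ξ j * ξ k : ℝ) : ℂ) * pd2 (Fev U) ξ j k) +
          5 * (∑ j : Fin 3, (ξ j : ℂ) * pd1 (Fev U) ξ j) + (15/4) * Fev U ξ))
        =ᵐ[μ] (fun ξ => f ξ - Fev p ξ) := by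
      rw [hμ]
      filter_upwards [hzero, ae_restrict_mem measurableSet_ball] with ξ h1 h2
      have hξPB : ξ ∈ PB := ⟨ball_subset_closedBall h2, h1⟩
      rw [g_eq U hξPB, hU]
    rw [eLpNorm_congr_ae h0]
    exact hp
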